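/- Let X be a k-regular graph whose adjacency matrix eigenvalues other than ±k all have absolute value at most λ. Then for any two vertex subsets S, T, one has | |E(S,T)| − k|S||T|/n | ≤ λ·√(|S||T|), where n = |X| and E(S,T) is the set of ordered pairs (s,t) with s ∈ S, t ∈ T adjacent. (Expander mixing lemma.) -/

import Mathlib

open SimpleGraph Finset
open scoped Matrix

/-- `l` is an eigenvalue of the real matrix `A`. -/
def Matrix.IsEigenvalue {V : Type*} [Fintype V] (A : Matrix V V ℝ) (l : ℝ) : Prop :=
  ∃ v : V → ℝ, v ≠ 0 ∧ A.mulVec v = l • v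

/-- A graph is bipartite if its vertices can be partitioned into two sets such that
every edge joins the two sides. -/
def SimpleGraph.IsBipartite' {V : Type*} (G : SimpleGraph V) : Prop :=
  ∃ S : Set V, ∀ a b, G.Adj a b → (a ∈ S ↔ b ∉ S)

/-- Expander mixing lemma: if all adjacency eigenvalues of a connected non-bipartite
`k`-regular graph other than `k` have absolute value at most `lam`, then for all vertex
subsets `S, T`: `| |E(S,T)| - k|S||T|/n | ≤ lam·√(|S||T|)`, where `E(S,T)` is the set of
ordered adjacent pairs. -/
theorem expander_mixing_lemma {V : Type*} [Fintype V] (k : ℕ)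
    (X : SimpleGraph V) [DecidableRel X.Adj]
    (hconn : X.Connected) (hnb : ¬ X.IsBipartite') (hreg : X.IsRegularOfDegree k)
    (lam : ℝ)
    (hlam : ∀ l : ℝ, (X.adjMatrix ℝ).IsEigenvalue l → l ≠ (k : ℝ) → |l| ≤ lam)
    (S T : Finset V) :
    |(((S ×ˢ T).filter fun p => X.Adj p.1 p.2).card : ℝ)
        - (k : ℝ) * S.card * T.card / (Fintype.card V : ℝ)|
      ≤ lam * Real.sqrt ((S.card : ℝ) * T.card) := by
  classical
  obtain ⟨a0, b0, hab⟩ : ∃ a b, X.Adj a b := by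
    by_contra h
    push_neg at h
    exact hnb ⟨∅, fun a b hadj => absurd hadj (h a b)⟩
  have hV : Nonempty V := ⟨a0⟩
  have hnontriv : Nontrivial V := ⟨⟨a0, b0, hab.ne⟩⟩
  have hn : (0:ℝ) < (Fintype.card V : ℝ) := by
    have : 0 < Fintype.card V := Fintype.card_pos
    exact_mod_cast this
  set A := X.adjMatrix ℝ with hAdef
  have hA : A.IsHermitian := by
    rw [Matrix.IsHermitian, Matrix.conjTranspose_eq_transpose_of_trivial]
    exact X.isSymm_adjMatrix
  have hsymA : ∀ i j, A i j = A j i := by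
    intro i j
    exact (X.isSymm_adjMatrix.apply i j).symm
  set e := hA.eigenvectorBasis with hedef
  set μ := hA.eigenvalues with hμdef
  have heig : ∀ j, A *ᵥ (e j) = μ j • (e j) := fun j => hA.mulVec_eigenvectorBasis j
  -- orthonormality in terms of plain sums
  have horth : ∀ i j, (∑ v, e i v * e j v) = if i = j then (1:ℝ) else 0 := by
    have h := e.orthonormal
    rw [orthonormal_iff_ite] at h
    intro i j
    have h2 := h i j
    simpa [PiLp.inner_apply, RCLike.inner_apply, conj_trivial, mul_comm] using h2
  have hne0 : ∀ j, (fun v => e j v) ≠ (0 : V → ℝ) := by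
    intro j h0
    have h1 := horth j j
    simp only [if_pos rfl] at h1
    rw [Finset.sum_congr rfl (fun v _ => by
      have : e j v = 0 := congrFun h0 v
      rw [this, mul_zero])] at h1
    simp at h1
  -- Parseval / bilinear expansion
  have key : ∀ w z : V → ℝ,
      (∑ v, w v * z v) = ∑ j, (∑ v, e j v * w v) * (∑ v, e j v * z v) := by
    intro w z
    have h := e.sum_inner_mul_inner (WithLp.equiv 2 _ |>.symm w) (WithLp.equiv 2 _ |>.symm z)
    simp only [PiLp.inner_apply, RCLike.inner_apply, conj_trivial, WithLp.equiv_symm_apply, PiLp.toLp_apply] at h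
    rw [show (∑ v, w v * z v) = ∑ v, z v * w v from Finset.sum_congr rfl (fun v _ => mul_comm _ _), ← h]
    apply Finset.sum_congr rfl
    intro j _
    congr 1
    · exact Finset.sum_congr rfl (fun v _ => mul_comm _ _)
  -- symmetry of the quadratic pairing
  have hswap : ∀ (w z : V → ℝ), ∑ v, w v * (A *ᵥ z) v = ∑ v, (A *ᵥ w) v * z v := by
    intro w z
    simp only [Matrix.mulVec, dotProduct, Finset.mul_sum, Finset.sum_mul]
    rw [Finset.sum_comm]
    apply Finset.sum_congr rfl
    intro v _
    apply Finset.sum_congr rfl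
    intro t _
    rw [hsymA t v]
    ring
  have hpair : ∀ j (z : V → ℝ),
      (∑ v, e j v * (A *ᵥ z) v) = μ j * ∑ v, e j v * z v := by
    intro j z
    rw [hswap (fun v => e j v) z]
    have h1 : (A *ᵥ fun v => e j v) = μ j • (e j) := heig j
    rw [h1, Finset.mul_sum]
    apply Finset.sum_congr rfl
    intro v _
    have : (μ j • (e j).ofLp) v = μ j * e j v := rfl
    rw [this]
    ring
  -- the all-ones vector: eigenvector of eigenvalue k
  have hAu : (A *ᵥ (fun _ => (1:ℝ))) = fun _ => (k:ℝ) := by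
    funext v
    rw [hAdef, SimpleGraph.adjMatrix_mulVec_apply]
    simp only [Finset.sum_const, nsmul_eq_mul, mul_one]
    norm_cast
    exact hreg v
  obtain ⟨j₀, hj₀⟩ : ∃ j, (∑ v, e j v) ≠ 0 := by
    by_contra h
    push_neg at h
    have h1 := key (fun _ => (1:ℝ)) (fun _ => (1:ℝ))
    simp only [mul_one, h, zero_mul, Finset.sum_const_zero, Finset.sum_const,
      Finset.card_univ, nsmul_eq_mul] at h1
    exact (ne_of_gt hn) h1
  have hμ₀ : μ j₀ = k := by
    have h1 := hpair j₀ (fun _ => (1:ℝ))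
    rw [hAu] at h1
    simp only [mul_one] at h1
    have h2 : (∑ v, e j₀ v * (k:ℝ)) = (∑ v, e j₀ v) * (k:ℝ) := by
      rw [Finset.sum_mul]
    rw [h2] at h1
    have h3 : μ j₀ * (∑ v, e j₀ v) = (k:ℝ) * (∑ v, e j₀ v) := by
      rw [← h1]; ring
    exact mul_right_cancel₀ hj₀ h3
  -- eigenvectors for k are constant
  have hconst : ∀ j, μ j = k → ∀ v w : V, e j v = e j w := by
    intro j hj v w
    have hlap : Matrix.toLin' (X.lapMatrix ℝ) (fun v => e j v) = 0 := by
      rw [Matrix.toLin'_apply]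
      have h1 : X.lapMatrix ℝ *ᵥ (fun v => e j v)
          = X.degMatrix ℝ *ᵥ (fun v => e j v) - A *ᵥ (fun v => e j v) := by
        rw [SimpleGraph.lapMatrix, Matrix.sub_mulVec]
      have h2 : (A *ᵥ fun v => e j v) = μ j • (e j) := heig j
      rw [h1, h2, hj]
      funext i
      simp only [Pi.sub_apply, SimpleGraph.degMatrix_mulVec_apply, hreg i, Pi.zero_apply]
      have : ((k:ℝ) • (e j).ofLp) i = (k:ℝ) * e j i := rfl
      rw [this]
      ring
    exact (X.lapMatrix_mulVec_eq_zero_iff_forall_reachable (x := fun v => e j v)).mp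
      (by rwa [Matrix.toLin'_apply] at hlap) v w
      (hconn.preconnected v w)
  have huniq : ∀ j, μ j = k → j = j₀ := by
    intro j hj
    by_contra hne
    have ho : (∑ v, e j v * e j₀ v) = 0 := by rw [horth j j₀, if_neg hne]
    have hcj : ∀ v, e j v = e j a0 := fun v => hconst j hj v a0
    have hcj₀ : ∀ v, e j₀ v = e j₀ a0 := fun v => hconst j₀ hμ₀ v a0
    have hinner : (∑ v, e j v * e j₀ v) = (Fintype.card V : ℝ) * (e j a0 * e j₀ a0) := by
      rw [Finset.sum_congr rfl (fun v _ => by rw [hcj v, hcj₀ v])]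
      rw [Finset.sum_const, Finset.card_univ, nsmul_eq_mul]
    have hej : e j a0 ≠ 0 := by
      intro h0
      exact hne0 j (funext fun v => by rw [hcj v, h0]; rfl)
    have hej₀ : e j₀ a0 ≠ 0 := by
      intro h0
      exact hne0 j₀ (funext fun v => by rw [hcj₀ v, h0]; rfl)
    rw [ho] at hinner
    exact (mul_ne_zero (ne_of_gt hn) (mul_ne_zero hej hej₀)) hinner.symm
  -- indicator vectors
  set x : V → ℝ := fun v => if v ∈ S then (1:ℝ) else 0 with hxdef
  set y : V → ℝ := fun v => if v ∈ T then (1:ℝ) else 0 with hydef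
  set a : V → ℝ := fun j => ∑ v, e j v * x v with hadef2
  set b : V → ℝ := fun j => ∑ v, e j v * y v with hbdef2
  -- edge count equals the quadratic form
  have hcount : (((S ×ˢ T).filter fun p => X.Adj p.1 p.2).card : ℝ)
      = ∑ v, x v * (A *ᵥ y) v := by
    simp only [Matrix.mulVec, dotProduct]
    rw [Finset.card_filter]
    push_cast
    rw [Finset.sum_product]
    simp only [hxdef, hydef]
    simp only [mul_ite, mul_one, mul_zero, ite_mul, one_mul, zero_mul]
    rw [Finset.sum_ite_mem, Finset.univ_inter]
    apply Finset.sum_congr rfl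
    intro s _
    rw [Finset.sum_ite_mem, Finset.univ_inter]
    apply Finset.sum_congr rfl
    intro t _
    simp [hAdef]
  -- expansion in the eigenbasis
  have hmain : (∑ v, x v * (A *ᵥ y) v) = ∑ j, μ j * (a j * b j) := by
    rw [key x (A *ᵥ y)]
    apply Finset.sum_congr rfl
    intro j _
    rw [hpair j y]
    simp only [hadef2, hbdef2]
    ring
  -- the j₀ term
  set c : ℝ := e j₀ a0 with hcdef
  have hc : ∀ v, e j₀ v = c := fun v => hconst j₀ hμ₀ v a0
  have hcsq : (Fintype.card V : ℝ) * c ^ 2 = 1 := by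
    have h1 := horth j₀ j₀
    rw [if_pos rfl] at h1
    rw [Finset.sum_congr rfl (fun v _ => by rw [hc v])] at h1
    rw [Finset.sum_const, Finset.card_univ, nsmul_eq_mul] at h1
    rw [← h1]; ring
  have haj₀ : a j₀ = c * S.card := by
    simp only [hadef2]
    rw [Finset.sum_congr rfl (fun v _ => by rw [hc v])]
    simp only [hxdef]
    simp only [mul_ite, mul_one, mul_zero]
    rw [Finset.sum_ite_mem, Finset.univ_inter, Finset.sum_const, nsmul_eq_mul]
    ring
  have hbj₀ : b j₀ = c * T.card := by
    simp only [hbdef2]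
    rw [Finset.sum_congr rfl (fun v _ => by rw [hc v])]
    simp only [hydef]
    simp only [mul_ite, mul_one, mul_zero]
    rw [Finset.sum_ite_mem, Finset.univ_inter, Finset.sum_const, nsmul_eq_mul]
    ring
  -- splitting off the j₀ term
  have hsplit : (((S ×ˢ T).filter fun p => X.Adj p.1 p.2).card : ℝ)
      - (k : ℝ) * S.card * T.card / (Fintype.card V : ℝ)
      = ∑ j ∈ Finset.univ.erase j₀, μ j * (a j * b j) := by
    rw [hcount, hmain, ← Finset.add_sum_erase _ _ (Finset.mem_univ j₀), hμ₀, haj₀, hbj₀]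
    have h2 : (k:ℝ) * (c * S.card * (c * T.card))
        = (k : ℝ) * S.card * T.card / (Fintype.card V : ℝ) := by
      rw [eq_div_iff (ne_of_gt hn)]
      linear_combination (k:ℝ) * S.card * T.card * hcsq
    rw [h2]; ring
  -- Parseval for the indicators
  have hxx : (∑ v, x v * x v) = (S.card : ℝ) := by
    have hv : ∀ v, x v * x v = if v ∈ S then (1:ℝ) else 0 := by
      intro v; simp only [hxdef]; by_cases h : v ∈ S <;> simp [h]
    rw [Finset.sum_congr rfl (fun v _ => hv v), Finset.sum_ite_mem, Finset.univ_inter,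
      Finset.sum_const, nsmul_eq_mul, mul_one]
  have hyy : (∑ v, y v * y v) = (T.card : ℝ) := by
    have hv : ∀ v, y v * y v = if v ∈ T then (1:ℝ) else 0 := by
      intro v; simp only [hydef]; by_cases h : v ∈ T <;> simp [h]
    rw [Finset.sum_congr rfl (fun v _ => hv v), Finset.sum_ite_mem, Finset.univ_inter,
      Finset.sum_const, nsmul_eq_mul, mul_one]
  have hsumA : ∑ j, a j ^ 2 = (S.card : ℝ) := by
    rw [← hxx, key x x]
    apply Finset.sum_congr rfl
    intro j _
    simp only [hadef2]; ring
  have hsumB : ∑ j, b j ^ 2 = (T.card : ℝ) := by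
    rw [← hyy, key y y]
    apply Finset.sum_congr rfl
    intro j _
    simp only [hbdef2]; ring
  -- the eigenvalue bound
  have hlam' : ∀ j, j ≠ j₀ → |μ j| ≤ lam := by
    intro j hj
    refine hlam (μ j) ⟨(fun v => e j v), hne0 j, heig j⟩ ?_
    intro hk
    exact hj (huniq j hk)
  obtain ⟨j₁, hj₁⟩ : ∃ j : V, j ≠ j₀ := exists_ne j₀
  have hlam0 : 0 ≤ lam := le_trans (abs_nonneg (μ j₁)) (hlam' j₁ hj₁)
  -- final estimate
  rw [hsplit]
  have hAle : ∑ j ∈ Finset.univ.erase j₀, |a j| ^ 2 ≤ (S.card : ℝ) := by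
    rw [← hsumA]
    simp only [sq_abs]
    exact Finset.sum_le_sum_of_subset_of_nonneg (Finset.erase_subset _ _)
      (fun j _ _ => sq_nonneg _)
  have hBle : ∑ j ∈ Finset.univ.erase j₀, |b j| ^ 2 ≤ (T.card : ℝ) := by
    rw [← hsumB]
    simp only [sq_abs]
    exact Finset.sum_le_sum_of_subset_of_nonneg (Finset.erase_subset _ _)
      (fun j _ _ => sq_nonneg _)
  calc |∑ j ∈ Finset.univ.erase j₀, μ j * (a j * b j)|
      ≤ ∑ j ∈ Finset.univ.erase j₀, |μ j * (a j * b j)| := Finset.abs_sum_le_sum_abs _ _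
    _ ≤ ∑ j ∈ Finset.univ.erase j₀, lam * (|a j| * |b j|) := by
        apply Finset.sum_le_sum
        intro j hj
        rw [abs_mul, abs_mul]
        have h1 := hlam' j (Finset.ne_of_mem_erase hj)
        have h2 : (0:ℝ) ≤ |a j| * |b j| := mul_nonneg (abs_nonneg _) (abs_nonneg _)
        exact mul_le_mul_of_nonneg_right h1 h2
    _ = lam * ∑ j ∈ Finset.univ.erase j₀, |a j| * |b j| := by rw [Finset.mul_sum]
    _ ≤ lam * (Real.sqrt (∑ j ∈ Finset.univ.erase j₀, |a j| ^ 2)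
          * Real.sqrt (∑ j ∈ Finset.univ.erase j₀, |b j| ^ 2)) :=
        mul_le_mul_of_nonneg_left (Real.sum_mul_le_sqrt_mul_sqrt _ _ _) hlam0
    _ ≤ lam * (Real.sqrt (S.card : ℝ) * Real.sqrt (T.card : ℝ)) := by
        apply mul_le_mul_of_nonneg_left _ hlam0
        have h1 := Real.sqrt_le_sqrt hAle
        have h2 := Real.sqrt_le_sqrt hBle
        exact mul_le_mul h1 h2 (Real.sqrt_nonneg _) (Real.sqrt_nonneg _)
    _ = lam * Real.sqrt ((S.card : ℝ) * T.card) := by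
        rw [← Real.sqrt_mul (Nat.cast_nonneg (α := ℝ) S.card)]
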